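/- arXiv:2501.13872 — 2 statements merged into one kernel-verified Lean document; each statement's English description precedes it below -/
import Mathlib

section
/- Let $q \ge 2$ be a real number. Then for all $s \ge 0$, $(e^s - 1)\, s \ge \frac{s^q}{\Gamma(q)}$, where $\Gamma$ denotes the Gamma function. -/
open Real Finset

private lemma gamma_combo_le (a b α β : ℝ) (ha : 0 < a) (hb : 0 < b)
    (hα : 0 ≤ α) (hβ : 0 ≤ β) (hαβ : α + β = 1) :
    Real.Gamma (α * a + β * b) ≤ Real.Gamma a ^ α * Real.Gamma b ^ β := by
  have h := Real.convexOn_log_Gamma.2 (Set.mem_Ioi.2 ha) (Set.mem_Ioi.2 hb) hα hβ hαβ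
  simp only [smul_eq_mul, Function.comp_apply] at h
  have hx : 0 < α * a + β * b := by
    rcases eq_or_lt_of_le hα with h0 | hpos
    · have hb1 : β = 1 := by linarith
      simp [← h0, hb1, hb]
    · nlinarith [mul_pos hpos ha, mul_nonneg hβ hb.le]
  calc Real.Gamma (α * a + β * b)
      = Real.exp (Real.log (Real.Gamma (α * a + β * b))) :=
        (Real.exp_log (Real.Gamma_pos_of_pos hx)).symm
    _ ≤ Real.exp (α * Real.log (Real.Gamma a) + β * Real.log (Real.Gamma b)) :=
        Real.exp_le_exp.2 h
    _ = Real.Gamma a ^ α * Real.Gamma b ^ β := by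
        rw [Real.exp_add, Real.rpow_def_of_pos (Real.Gamma_pos_of_pos ha),
          Real.rpow_def_of_pos (Real.Gamma_pos_of_pos hb), mul_comm α, mul_comm β]

set_option maxHeartbeats 1600000 in
/-- For real `q ≥ 2` and `s ≥ 0`, `(e^s - 1) s ≥ s^q / Γ(q)`. -/
theorem exp_sub_one_mul_ge_rpow_div_gamma
    (q : ℝ) (hq : 2 ≤ q) (s : ℝ) (hs : 0 ≤ s) :
    s ^ q / Real.Gamma q ≤ (Real.exp s - 1) * s := by
  have hq0 : 0 < q := by linarith
  have hG : 0 < Real.Gamma q := Real.Gamma_pos_of_pos hq0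
  rcases eq_or_lt_of_le hs with rfl | hs0
  · simp [Real.zero_rpow hq0.ne']
  obtain ⟨n, hnq, hqn1⟩ : ∃ n : ℕ, (n:ℝ) ≤ q ∧ q < (n:ℝ) + 1 :=
    ⟨⌊q⌋₊, Nat.floor_le hq0.le, Nat.lt_floor_add_one q⟩
  have hn2 : 2 ≤ n := by
    have h1n : (1:ℕ) < n := by exact_mod_cast (show (1:ℝ) < (n:ℕ) by linarith)
    omega
  obtain ⟨t, htdef⟩ : ∃ t : ℝ, t = q - n := ⟨_, rfl⟩
  have ht0 : 0 ≤ t := by rw [htdef]; linarith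
  have ht1 : t < 1 := by rw [htdef]; linarith
  have hn2R : (2:ℝ) ≤ (n:ℝ) := by exact_mod_cast hn2
  -- Taylor series bound
  have key : (1 : ℝ) + s ^ (n-1) / (Nat.factorial (n-1) : ℝ) + s ^ n / (Nat.factorial n : ℝ) ≤ Real.exp s := by
    refine le_trans ?_ (Real.sum_le_exp_of_nonneg hs (n+1))
    have hsub : ({0, n-1, n} : Finset ℕ) ⊆ Finset.range (n+1) := by
      intro i hi; simp only [Finset.mem_insert, Finset.mem_singleton] at hi
      simp only [Finset.mem_range]; omega
    refine le_trans ?_ (Finset.sum_le_sum_of_subset_of_nonneg hsub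
      (fun i _ _ => by positivity))
    rw [Finset.sum_insert (by simp; omega), Finset.sum_insert (by simp; omega),
      Finset.sum_singleton]
    simp only [pow_zero, Nat.factorial_zero, Nat.cast_one, div_one]
    linarith
  set D : ℝ := (n : ℝ) * s ^ n + s ^ (n+1) with hD
  have hfacn : (Nat.factorial n : ℝ) = (n:ℝ) * Nat.factorial (n-1) := by
    have h1 : Nat.factorial n = n * Nat.factorial (n-1) :=
      (Nat.mul_factorial_pred (by omega)).symm
    rw [h1]; push_cast; ring
  have hfacpos : (0:ℝ) < Nat.factorial n := by exact_mod_cast Nat.factorial_pos n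
  have hfac1pos : (0:ℝ) < Nat.factorial (n-1) := by exact_mod_cast Nat.factorial_pos (n-1)
  have hE : D / (Nat.factorial n : ℝ) ≤ (Real.exp s - 1) * s := by
    have h2 : (s ^ (n-1) / (Nat.factorial (n-1) : ℝ) + s ^ n / (Nat.factorial n : ℝ)) * s ≤ (Real.exp s - 1) * s := by
      apply mul_le_mul_of_nonneg_right _ hs
      linarith
    refine le_trans (le_of_eq ?_) h2
    have hpow : s ^ (n-1) * s = s ^ n := by
      rw [← pow_succ]; congr 1; omega
    rw [hD, add_mul, div_mul_eq_mul_div, div_mul_eq_mul_div, hpow, ← pow_succ]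
    rw [div_add_div _ _ (ne_of_gt hfac1pos) (ne_of_gt hfacpos)]
    rw [div_eq_div_iff (by positivity) (by positivity)]
    rw [hfacn]; ring
  have hDnn : 0 ≤ D := by positivity
  have hexp : 0 ≤ (Real.exp s - 1) * s := by
    nlinarith [Real.add_one_le_exp s]
  rw [div_le_iff₀ hG]
  have hsq : s ^ q = (s ^ ((n:ℝ))) ^ (1 - t) * (s ^ ((n:ℝ)+1)) ^ t := by
    rw [← Real.rpow_mul hs, ← Real.rpow_mul hs, ← Real.rpow_add hs0]
    congr 1; rw [htdef]; ring
  have hrn : s ^ ((n:ℝ)) = s ^ n := Real.rpow_natCast s n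
  have hrn1 : s ^ ((n:ℝ)+1) = s ^ (n+1) := by
    rw [show ((n:ℝ)+1) = ((n+1 : ℕ) : ℝ) by push_cast; ring, Real.rpow_natCast]
  by_cases hc : 1 ≤ t * ((n:ℝ) + 1)
  · -- use Γ q ≥ n! / (n+1)^(1-t)
    have hGA : (Nat.factorial n : ℝ) ≤ Real.Gamma q * ((n:ℝ)+1) ^ (1-t) := by
      have hcombo := gamma_combo_le q (q+1) t (1-t) hq0 (by linarith)
        ht0 (by linarith) (by ring)
      have harg : t * q + (1-t) * (q+1) = (n:ℝ) + 1 := by rw [htdef]; ring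
      rw [harg, Real.Gamma_nat_eq_factorial n, Real.Gamma_add_one hq0.ne'] at hcombo
      refine hcombo.trans ?_
      rw [Real.mul_rpow hq0.le hG.le,
        show Real.Gamma q ^ t * (q ^ (1-t) * Real.Gamma q ^ (1-t))
          = (Real.Gamma q ^ t * Real.Gamma q ^ (1-t)) * q ^ (1-t) by ring,
        ← Real.rpow_add hG]
      simp only [add_sub_cancel, Real.rpow_one]
      exact mul_le_mul_of_nonneg_left
        (Real.rpow_le_rpow hq0.le hqn1.le (by linarith)) hG.le
    have hAM : s ^ q * ((n:ℝ)+1) ^ (1-t) ≤ D := by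
      have h := Real.geom_mean_le_arith_mean2_weighted (w₁ := 1-t) (w₂ := t)
        (p₁ := ((n:ℝ)+1) * s ^ n) (p₂ := s ^ (n+1)) (by linarith) ht0
        (by positivity) (by positivity) (by ring)
      have heq : (((n:ℝ)+1) * s ^ n) ^ (1-t) * (s ^ (n+1)) ^ t
          = s ^ q * ((n:ℝ)+1) ^ (1-t) := by
        rw [Real.mul_rpow (by positivity) (by positivity), hsq, hrn, hrn1]; ring
      rw [heq] at h
      refine h.trans ?_
      have hw : (1-t) * ((n:ℝ)+1) ≤ (n:ℝ) := by nlinarith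
      have h1 : (1-t) * (((n:ℝ)+1) * s ^ n) ≤ (n:ℝ) * s ^ n := by
        rw [← mul_assoc]; exact mul_le_mul_of_nonneg_right hw (by positivity)
      have h2 : t * s ^ (n+1) ≤ s ^ (n+1) := by
        nlinarith [pow_nonneg hs (n+1)]
      rw [hD]; linarith [h1, h2]
    have hpow1 : (0:ℝ) < ((n:ℝ)+1) ^ (1-t) := by positivity
    calc s ^ q = (s ^ q * ((n:ℝ)+1) ^ (1-t)) / ((n:ℝ)+1) ^ (1-t) := by
          field_simp
      _ ≤ D / ((n:ℝ)+1) ^ (1-t) := by gcongr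
      _ ≤ (D / (Nat.factorial n : ℝ)) * Real.Gamma q := by
          rw [div_le_iff₀ hpow1, show D / (Nat.factorial n : ℝ) * Real.Gamma q
              * ((n:ℝ)+1) ^ (1-t)
              = D * (Real.Gamma q * ((n:ℝ)+1) ^ (1-t)) / (Nat.factorial n : ℝ) by ring,
            le_div_iff₀ hfacpos]
          exact mul_le_mul_of_nonneg_left hGA hDnn
      _ ≤ (Real.exp s - 1) * s * Real.Gamma q :=
          mul_le_mul_of_nonneg_right hE hG.le
  · -- use Γ q ≥ Nat.factorial (n-1)
    push_neg at hc
    have hGB : (Nat.factorial (n-1) : ℝ) ≤ Real.Gamma q := by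
      have hcombo := gamma_combo_le q (q-1) (1-t) t hq0 (by linarith)
        (by linarith) ht0 (by ring)
      have harg : (1-t) * q + t * (q-1) = (n:ℝ) := by rw [htdef]; ring
      rw [harg] at hcombo
      have hΓn : Real.Gamma ((n:ℝ)) = (Nat.factorial (n-1) : ℝ) := by
        have h := Real.Gamma_nat_eq_factorial (n-1)
        rwa [show ((n-1 : ℕ):ℝ) + 1 = (n:ℝ) by
          have h1 : (1:ℕ) ≤ n := by omega
          push_cast [Nat.cast_sub h1]; ring] at h
      have hq10 : q - 1 ≠ 0 := ne_of_gt (by linarith)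
      have hΓq1 : Real.Gamma (q-1) = Real.Gamma q / (q-1) := by
        have h := Real.Gamma_add_one (s := q-1) hq10
        rw [sub_add_cancel] at h
        rw [h, mul_comm, mul_div_assoc, div_self hq10, mul_one]
      rw [hΓn, hΓq1] at hcombo
      refine hcombo.trans ?_
      have h1 : (Real.Gamma q / (q-1)) ^ t ≤ Real.Gamma q ^ t :=
        Real.rpow_le_rpow (div_nonneg hG.le (by linarith)) (div_le_self hG.le (by linarith)) ht0
      calc Real.Gamma q ^ (1-t) * (Real.Gamma q / (q-1)) ^ t
          ≤ Real.Gamma q ^ (1-t) * Real.Gamma q ^ t :=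
            mul_le_mul_of_nonneg_left h1 (by positivity)
        _ = Real.Gamma q := by
            rw [← Real.rpow_add hG, sub_add_cancel, Real.rpow_one]
    have hAM : s ^ q ≤ (1-t) * s ^ n + t * s ^ (n+1) := by
      have h := Real.geom_mean_le_arith_mean2_weighted (w₁ := 1-t) (w₂ := t)
        (p₁ := s ^ n) (p₂ := s ^ (n+1)) (by linarith) ht0
        (by positivity) (by positivity) (by ring)
      rw [hsq, hrn, hrn1]
      exact h
    calc s ^ q ≤ (1-t) * s ^ n + t * s ^ (n+1) := hAM
      _ ≤ s ^ n + s ^ (n+1) / n := by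
          have h1 : (1-t) * s ^ n ≤ s ^ n := by nlinarith [pow_nonneg hs n]
          have h2 : t * s ^ (n+1) ≤ s ^ (n+1) / n := by
            rw [le_div_iff₀ (by linarith : (0:ℝ) < (n:ℝ))]
            have htn : t * (n:ℝ) ≤ 1 := by nlinarith
            nlinarith [pow_nonneg hs (n+1)]
          linarith
      _ = (D / (Nat.factorial n : ℝ)) * Nat.factorial (n-1) := by
          rw [hD, hfacn]; field_simp
      _ ≤ ((Real.exp s - 1) * s) * Real.Gamma q :=
          mul_le_mul hE hGB (by positivity) hexp
end

section
/- Let $d \ge 1$, $q > 1$, and let $f : \mathbb{T}^d \times \mathbb{R}^d \to [0,\infty)$ be measurable with $f \in L^q(\mathbb{T}^d \times \mathbb{R}^d)$ and $\iint |v|^2 f\,dx\,dv < \infty$. Set $\rho(x) := \int_{\mathbb{R}^d} f(x,v)\,dv$ and $p := \frac{d(q-1)+2q}{d(q-1)+2}$. Then there exists a constant $C = C(d,q)$ such that $\|\rho\|_{L^p(\mathbb{T}^d)} \le C\, \|f\|_{L^q(\mathbb{T}^d\times\mathbb{R}^d)}^{\frac{2/d}{1/q' + 2/d}} \left(\iint_{\mathbb{T}^d\times\mathbb{R}^d}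 |v|^2 f\,dx\,dv\right)^{\frac{1/q'}{1/q' + 2/d}}$, where $q' = q/(q-1)$. -/
set_option maxHeartbeats 1000000

open MeasureTheory Metric
open scoped ENNReal

lemma opt_lemma {α : ℝ} (hα : 0 < α) (g a b : ℝ≥0∞)
    (ha0 : a = 0 → g = 0) (hb0 : b = 0 → g = 0)
    (h : ∀ r : ℝ≥0∞, r ≠ 0 → r ≠ ∞ → g ≤ a * r ^ α + b * r ^ (-2 : ℝ)) :
    g ≤ 2 * a ^ (2 / (α + 2)) * b ^ (α / (α + 2)) := by
  have hα2 : (0:ℝ) < α + 2 := by linarith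
  rcases eq_or_ne a 0 with rfl | ha
  · simp [ha0 rfl]
  rcases eq_or_ne b 0 with rfl | hb
  · simp [hb0 rfl]
  rcases eq_or_ne a ∞ with rfl | ha'
  · have h1 : (⊤ : ℝ≥0∞) ^ (2 / (α + 2)) = ⊤ := ENNReal.top_rpow_of_pos (by positivity)
    rw [h1]
    have hbθ : b ^ (α / (α + 2)) ≠ 0 := by
      simp [ENNReal.rpow_eq_zero_iff, hb, not_lt.2 (le_of_lt (by positivity : (0:ℝ) < α / (α+2)))]
    rw [ENNReal.mul_top (by norm_num), ENNReal.top_mul hbθ]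
    exact le_top
  rcases eq_or_ne b ∞ with rfl | hb'
  · have h1 : (⊤ : ℝ≥0∞) ^ (α / (α + 2)) = ⊤ := ENNReal.top_rpow_of_pos (by positivity)
    rw [h1]
    have h2 : ¬ (2 / (α + 2) < (0:ℝ)) := not_lt.2 (by positivity)
    have haθ : 2 * a ^ (2 / (α + 2)) ≠ 0 := by
      simp [ENNReal.rpow_eq_zero_iff, ha, h2]
    rw [ENNReal.mul_top haθ]
    exact le_top
  · set i : ℝ := (α + 2)⁻¹ with hi
    have hipos : 0 < i := by positivity
    have key : i * α + 2 * i = 1 := by field_simp [hi]; rw [hi]; exact inv_mul_cancel₀ hα2.ne'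
    set r : ℝ≥0∞ := b ^ i * a ^ (-i) with hr
    have hr0 : r ≠ 0 := by
      simp [hr, ENNReal.rpow_eq_zero_iff, hb, hb', ha, ha', hipos, hipos.le, not_lt.2 hipos.le]
    have hrt : r ≠ ∞ := by
      simp [hr, ENNReal.mul_eq_top, ENNReal.rpow_eq_top_iff, hb, hb', ha, ha']
    refine (h r hr0 hrt).trans_eq ?_
    have hmul : ∀ (x : ℝ), r ^ x = b ^ (i * x) * a ^ (-i * x) := by
      intro x
      rw [hr, ENNReal.mul_rpow_of_ne_top (by simp [ENNReal.rpow_eq_top_iff, hb, hb'])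
        (by simp [ENNReal.rpow_eq_top_iff, ha, ha']), ← ENNReal.rpow_mul, ← ENNReal.rpow_mul]
    rw [hmul α, hmul (-2)]
    have e1 : a * (b ^ (i * α) * a ^ (-i * α)) = a ^ (2 * i) * b ^ (i * α) := by
      have h1 : a * (b ^ (i*α) * a ^ (-i*α)) = b^(i*α) * (a^(1:ℝ) * a^(-i*α)) := by
        rw [ENNReal.rpow_one]; ring
      rw [h1, ← ENNReal.rpow_add _ _ ha ha', show (1:ℝ) + -i*α = 2*i from by linarith, mul_comm]
    have e2 : b * (b ^ (i * -2) * a ^ (-i * -2)) = a ^ (2 * i) * b ^ (i * α) := by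
      have h1 : b * (b ^ (i*-2) * a ^ (-i*-2)) = a^(-i*-2) * (b^(1:ℝ) * b^(i*-2)) := by
        rw [ENNReal.rpow_one]; ring
      rw [h1, ← ENNReal.rpow_add _ _ hb hb', show (1:ℝ) + i*-2 = i*α from by linarith,
        show (-i:ℝ)*-2 = 2*i from by ring]
    rw [e1, e2, ← two_mul, show (2:ℝ) / (α+2) = 2 * i by rw [hi]; ring,
      show α / (α+2) = i * α by rw [hi]; ring, mul_assoc]

section Main

variable (d : ℕ) (q : ℝ)

local notation "X" => (Fin d → AddCircle (1:ℝ))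
local notation "V" => EuclideanSpace ℝ (Fin d)

/-- Velocity-moment interpolation: for `f ≥ 0` in `L^q(𝕋^d × ℝ^d)` with finite
second velocity moment, the spatial density `ρ(x) = ∫ f(x,v) dv` satisfies
`‖ρ‖_{L^p} ≤ C ‖f‖_{L^q}^{(2/d)/(1/q'+2/d)} (∬ |v|² f)^{(1/q')/(1/q'+2/d)}`,
with `p = (d(q-1)+2q)/(d(q-1)+2)` and `C = C(d,q)`. -/
theorem density_interpolation_estimate (d : ℕ) (hd : 1 ≤ d) (q : ℝ) (hq : 1 < q) :
    ∃ C : ℝ, 0 < C ∧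
      ∀ f : ((Fin d → AddCircle (1:ℝ)) × EuclideanSpace ℝ (Fin d)) → ℝ,
        Measurable f →
        (∀ z, 0 ≤ f z) →
        MemLp f (ENNReal.ofReal q) volume →
        Integrable (fun z => ‖z.2‖ ^ 2 * f z) volume →
        (eLpNorm (fun x => ∫ v : EuclideanSpace ℝ (Fin d), f (x, v))
            (ENNReal.ofReal ((d * (q - 1) + 2 * q) / (d * (q - 1) + 2))) volume).toReal ≤
          C * (eLpNorm f (ENNReal.ofReal q) volume).toReal ^
              ((2 / d) / ((q - 1) / q + 2 / d)) *
            (∫ z : ((Fin d → AddCircle (1:ℝ)) × EuclideanSpace ℝ (Fin d)),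
                ‖z.2‖ ^ 2 * f z) ^ (((q - 1) / q) / ((q - 1) / q + 2 / d)) := by
  have hq0 : (0:ℝ) < q := lt_trans one_pos hq
  have hq1 : (0:ℝ) < q - 1 := by linarith
  have hd1 : (1:ℝ) ≤ (d:ℝ) := by exact_mod_cast hd
  have hd0 : (0:ℝ) < d := by linarith
  set q' : ℝ := Real.conjExponent q with hq'def
  have hconj : q.HolderConjugate q' := Real.HolderConjugate.conjExponent hq
  have hq'eq : q' = q / (q - 1) := rfl
  have hq'0 : 0 < q' := hconj.symm.pos
  have h1q' : 1 / q' = (q - 1) / q := by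
    rw [hq'eq]; field_simp
  set D : ℝ := ↑d * (q - 1) with hD
  have hD0 : 0 < D := by positivity
  set α : ℝ := D / q with hα
  have hα0 : 0 < α := by positivity
  set θ : ℝ := 2 / (α + 2) with hθ
  have hα2 : (0:ℝ) < α + 2 := by linarith
  have hθ0 : 0 < θ := by positivity
  have hθ1 : θ < 1 := by
    rw [hθ, div_lt_one hα2]; linarith
  have h1θ : 1 - θ = α / (α + 2) := by
    rw [hθ]; field_simp; ring
  set p : ℝ := (D + 2 * q) / (D + 2) with hp
  have hD2 : (0:ℝ) < D + 2 := by linarith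
  have hp1 : 1 < p := by
    rw [hp, lt_div_iff₀ hD2]; linarith
  have hp0 : 0 < p := by linarith
  -- exponent identities
  have hαq : α * q = D := by rw [hα]; field_simp
  have hθeq : (2 / ↑d) / ((q - 1) / q + 2 / ↑d) = θ := by
    rw [hθ, hα, hD]; field_simp
  have h1θeq : ((q - 1) / q) / ((q - 1) / q + 2 / ↑d) = 1 - θ := by
    rw [h1θ, hα, hD]; field_simp
  have hkey : θ * p / q + (1 - θ) * p = 1 := by
    rw [hθ, h1θ, hp, hα]; field_simp; ring
  -- the unit ball volume
  haveI : Nonempty (Fin d) := ⟨⟨0, hd⟩⟩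
  haveI : Nontrivial (EuclideanSpace ℝ (Fin d)) := by
    refine nontrivial_of_ne (EuclideanSpace.single ⟨0, hd⟩ (1:ℝ)) 0 ?_
    intro h
    have := congrArg (fun w => w ⟨0, hd⟩) h
    simp [EuclideanSpace.single] at this
  set c : ℝ≥0∞ := volume (ball (0 : EuclideanSpace ℝ (Fin d)) 1) with hc
  have hc0 : c ≠ 0 := (measure_ball_pos _ _ one_pos).ne'
  have hct : c ≠ ∞ := measure_ball_lt_top.ne
  have hcR : 0 < c.toReal := ENNReal.toReal_pos hc0 hct
  refine ⟨2 * c.toReal ^ (θ / q'), mul_pos two_pos (Real.rpow_pos_of_pos hcR _), ?_⟩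
  intro f hfm hf0 hfq hfi
  rw [hθeq, h1θeq]
  set F : ((Fin d → AddCircle (1:ℝ)) × EuclideanSpace ℝ (Fin d)) → ℝ≥0∞ :=
    fun z => ENNReal.ofReal (f z) with hF
  have hFm : Measurable F := hfm.ennreal_ofReal
  have hFx : ∀ x, Measurable (fun v : EuclideanSpace ℝ (Fin d) => F (x, v)) :=
    fun x => hFm.comp measurable_prodMk_left
  set g : (Fin d → AddCircle (1:ℝ)) → ℝ≥0∞ := fun x => ∫⁻ v, F (x, v) with hg
  set Aq : (Fin d → AddCircle (1:ℝ)) → ℝ≥0∞ := fun x => ∫⁻ v, F (x, v) ^ q with hAq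
  set m : (Fin d → AddCircle (1:ℝ)) → ℝ≥0∞ :=
    fun x => ∫⁻ v, ENNReal.ofReal (‖v‖ ^ 2) * F (x, v) with hm
  have hmzm : Measurable (fun z : ((Fin d → AddCircle (1:ℝ)) × EuclideanSpace ℝ (Fin d)) =>
      ENNReal.ofReal (‖z.2‖ ^ 2) * F z) :=
    ((measurable_snd.norm.pow measurable_const).ennreal_ofReal).mul hFm
  have hAqm : Measurable Aq := (hFm.pow_const q).lintegral_prod_right'
  have hmm : Measurable m := hmzm.lintegral_prod_right'
  -- key pointwise bound
  have key : ∀ x, g x ≤ 2 * ((Aq x) ^ (1/q) * c ^ (1/q')) ^ θ * (m x) ^ (1 - θ) := by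
    intro x
    rw [h1θ]
    refine opt_lemma hα0 (g x) _ (m x) ?_ ?_ ?_
    · -- first factor zero forces g x = 0
      intro h
      have hcq : c ^ (1/q') ≠ 0 := by
        simp [ENNReal.rpow_eq_zero_iff, hc0, hct, not_lt.2 (by positivity : (0:ℝ) ≤ 1/q')]
      have hA0 : (Aq x) ^ (1/q) = 0 := by
        rcases mul_eq_zero.mp h with h' | h'
        · exact h'
        · exact absurd h' hcq
      have hA : Aq x = 0 := by
        rcases ENNReal.rpow_eq_zero_iff.mp hA0 with ⟨h1, _⟩ | ⟨_, h2⟩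
        · exact h1
        · exfalso; have hqq : (0:ℝ) < 1/q := by positivity
          linarith
      have hae := (lintegral_eq_zero_iff ((hFx x).pow_const q)).mp hA
      rw [show g x = ∫⁻ v, F (x, v) from rfl, lintegral_eq_zero_iff (hFx x)]
      filter_upwards [hae] with v hv
      simp only [Pi.zero_apply] at hv ⊢
      rcases ENNReal.rpow_eq_zero_iff.mp hv with ⟨h1, _⟩ | ⟨h1, _⟩
      · exact h1
      · exact absurd h1 ENNReal.ofReal_ne_top
    · -- m x = 0 forces g x = 0
      intro h
      have h0 : volume ({(0 : EuclideanSpace ℝ (Fin d))} : Set _) = 0 := by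
        have hsing : ({(0 : EuclideanSpace ℝ (Fin d))} : Set _) = closedBall 0 0 := by simp
        rw [hsing, Measure.addHaar_closedBall _ _ le_rfl, finrank_euclideanSpace_fin,
          zero_pow (by omega : d ≠ 0)]
        simp
      have hae := (lintegral_eq_zero_iff
        (((measurable_norm.pow measurable_const).ennreal_ofReal).mul (hFx x))).mp h
      have hne : ∀ᵐ v : EuclideanSpace ℝ (Fin d), v ≠ 0 := by
        rw [ae_iff]
        have : {v : EuclideanSpace ℝ (Fin d) | ¬ v ≠ 0} = {0} := by ext v; simp
        rw [this]; exact h0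
      rw [show g x = ∫⁻ v, F (x, v) from rfl, lintegral_eq_zero_iff (hFx x)]
      filter_upwards [hae, hne] with v hv hv0
      simp only [Pi.zero_apply, Pi.mul_apply] at hv ⊢
      rcases mul_eq_zero.mp hv with h' | h'
      · exfalso
        have hvn : ‖v‖ ≠ 0 := norm_ne_zero_iff.mpr hv0
        have : (0:ℝ) < ‖v‖ ^ 2 := by positivity
        rw [ENNReal.ofReal_eq_zero] at h'
        linarith
      · exact h'
    · -- the splitting bound
      intro r hr0 hrt
      set R : ℝ := r.toReal with hRdef
      have hRpos : 0 < R := ENNReal.toReal_pos hr0 hrt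
      have hrR : r = ENNReal.ofReal R := (ENNReal.ofReal_toReal hrt).symm
      have hsplit : g x = (∫⁻ v in ball (0 : EuclideanSpace ℝ (Fin d)) R, F (x, v))
          + ∫⁻ v in (ball (0 : EuclideanSpace ℝ (Fin d)) R)ᶜ, F (x, v) :=
        (lintegral_add_compl _ measurableSet_ball).symm
      have hαd : (d:ℝ) * (1/q') = α := by rw [h1q', hα, hD]; ring
      have part1 : (∫⁻ v in ball (0 : EuclideanSpace ℝ (Fin d)) R, F (x, v))
          ≤ (Aq x) ^ (1/q) * c ^ (1/q') * r ^ α := by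
        have hind : (∫⁻ v in ball (0 : EuclideanSpace ℝ (Fin d)) R, F (x, v))
            = ∫⁻ v, ((fun v => F (x, v)) * (ball (0 : EuclideanSpace ℝ (Fin d)) R).indicator (1 : EuclideanSpace ℝ (Fin d) → ℝ≥0∞)) v := by
          rw [← lintegral_indicator measurableSet_ball]
          congr 1; ext v
          by_cases hv : v ∈ ball (0 : EuclideanSpace ℝ (Fin d)) R <;> simp [hv]
        rw [hind]
        refine (ENNReal.lintegral_mul_le_Lp_mul_Lq volume hconj (hFx x).aemeasurable
          ((measurable_one.indicator measurableSet_ball).aemeasurable)).trans ?_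
        have hind2 : (∫⁻ v, ((ball (0 : EuclideanSpace ℝ (Fin d)) R).indicator (1 : EuclideanSpace ℝ (Fin d) → ℝ≥0∞) v) ^ q')
            = volume (ball (0 : EuclideanSpace ℝ (Fin d)) R) := by
          rw [← lintegral_indicator_one measurableSet_ball]
          congr 1; ext v
          by_cases hv : v ∈ ball (0 : EuclideanSpace ℝ (Fin d)) R <;>
            simp [hv, ENNReal.zero_rpow_of_pos hconj.symm.pos]
        rw [hind2, Measure.addHaar_ball _ _ hRpos.le, finrank_euclideanSpace_fin,
          ENNReal.mul_rpow_of_nonneg _ _ (by positivity : (0:ℝ) ≤ 1/q')]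
        have hRα : (ENNReal.ofReal (R ^ d)) ^ (1/q') = r ^ α := by
          rw [hrR, ENNReal.ofReal_rpow_of_pos (by positivity), ENNReal.ofReal_rpow_of_pos hRpos]
          congr 1
          rw [← Real.rpow_natCast R d, ← Real.rpow_mul hRpos.le, hαd]
        rw [hRα]
        exact le_of_eq (by ring)
      have part2 : (∫⁻ v in (ball (0 : EuclideanSpace ℝ (Fin d)) R)ᶜ, F (x, v))
          ≤ m x * r ^ (-2:ℝ) := by
        have hmes : Measurable (fun v : EuclideanSpace ℝ (Fin d) =>
            r ^ (-2:ℝ) * (ENNReal.ofReal (‖v‖ ^ 2) * F (x, v))) :=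
          measurable_const.mul (((measurable_norm.pow measurable_const).ennreal_ofReal).mul (hFx x))
        have hmono : ∀ v ∈ (ball (0 : EuclideanSpace ℝ (Fin d)) R)ᶜ,
            F (x, v) ≤ r ^ (-2:ℝ) * (ENNReal.ofReal (‖v‖ ^ 2) * F (x, v)) := by
          intro v hv
          have hRv : R ≤ ‖v‖ := not_lt.mp (fun h => hv (mem_ball_zero_iff.mpr h))
          have h2 : r ^ (2:ℝ) ≤ ENNReal.ofReal (‖v‖ ^ 2) := by
            rw [hrR, ENNReal.ofReal_rpow_of_pos hRpos]
            refine ENNReal.ofReal_le_ofReal ?_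
            rw [show (2:ℝ) = ((2:ℕ):ℝ) by norm_num, Real.rpow_natCast]
            nlinarith
          have h1 : (1:ℝ≥0∞) ≤ r ^ (-2:ℝ) * ENNReal.ofReal (‖v‖ ^ 2) := by
            have : (1:ℝ≥0∞) = r ^ (-2:ℝ) * r ^ (2:ℝ) := by
              rw [← ENNReal.rpow_add _ _ hr0 hrt]; norm_num
            rw [this]
            exact mul_le_mul_right h2 _
          calc F (x, v) = 1 * F (x, v) := (one_mul _).symm
            _ ≤ (r ^ (-2:ℝ) * ENNReal.ofReal (‖v‖ ^ 2)) * F (x, v) := mul_le_mul_left h1 _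
            _ = r ^ (-2:ℝ) * (ENNReal.ofReal (‖v‖ ^ 2) * F (x, v)) := mul_assoc _ _ _
        calc (∫⁻ v in (ball (0 : EuclideanSpace ℝ (Fin d)) R)ᶜ, F (x, v))
            ≤ ∫⁻ v in (ball (0 : EuclideanSpace ℝ (Fin d)) R)ᶜ,
                r ^ (-2:ℝ) * (ENNReal.ofReal (‖v‖ ^ 2) * F (x, v)) :=
              setLIntegral_mono hmes hmono
          _ ≤ ∫⁻ v, r ^ (-2:ℝ) * (ENNReal.ofReal (‖v‖ ^ 2) * F (x, v)) :=
              setLIntegral_le_lintegral _ _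
          _ = r ^ (-2:ℝ) * m x := lintegral_const_mul _
              (((measurable_norm.pow measurable_const).ennreal_ofReal).mul (hFx x))
          _ = m x * r ^ (-2:ℝ) := mul_comm _ _
      calc g x = _ := hsplit
        _ ≤ (Aq x) ^ (1/q) * c ^ (1/q') * r ^ α + m x * r ^ (-2:ℝ) := add_le_add part1 part2
  -- global stage
  set Nq : ℝ≥0∞ := ∫⁻ z, F z ^ q with hNqdef
  set M : ℝ≥0∞ := ∫⁻ z, ENNReal.ofReal (‖z.2‖ ^ 2) * F z with hMdef
  have hvol : (volume : Measure ((Fin d → AddCircle (1:ℝ)) × EuclideanSpace ℝ (Fin d)))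
      = (volume : Measure (Fin d → AddCircle (1:ℝ))).prod volume := Measure.volume_eq_prod _ _
  have hFub1 : ∫⁻ x, Aq x = Nq := by
    rw [hNqdef, hvol, lintegral_prod _ ((hFm.pow_const q).aemeasurable)]
  have hFub2 : ∫⁻ x, m x = M := by
    rw [hMdef, hvol, lintegral_prod _ hmzm.aemeasurable]
  -- conjugate exponents for the x-integration
  have hθp : 0 < θ * p := by positivity
  have h1θp : 0 < (1 - θ) * p := by nlinarith
  set s : ℝ := q / (θ * p) with hs
  have hsinv : s⁻¹ = θ * p / q := by rw [hs]; field_simp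
  have hs1 : 1 < s := by
    rw [hs, lt_div_iff₀ hθp, one_mul]
    have h2 : θ * p / q = 1 - (1 - θ) * p := by linarith [hkey]
    have h3 : θ * p / q < 1 := by rw [h2]; linarith
    calc θ * p = (θ * p / q) * q := by field_simp
      _ < 1 * q := by exact mul_lt_mul_of_pos_right h3 hq0
      _ = q := one_mul q
  have hconj2 : s.HolderConjugate (((1 - θ) * p)⁻¹) := by
    rw [Real.holderConjugate_iff]
    constructor
    · exact hs1
    · rw [hsinv, inv_inv]; exact hkey
  have he1s : (θ * p / q) * s = 1 := by rw [hs]; field_simp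
  have he2s : ((1 - θ) * p) * ((1 - θ) * p)⁻¹ = 1 := mul_inv_cancel₀ h1θp.ne'
  have h1s : 1 / s = θ * p / q := by rw [one_div, hsinv]
  have h1s' : 1 / ((1 - θ) * p)⁻¹ = (1 - θ) * p := by rw [one_div, inv_inv]
  have hH2 : ∫⁻ x, (Aq x) ^ (θ * p / q) * (m x) ^ ((1 - θ) * p)
      ≤ Nq ^ (θ * p / q) * M ^ ((1 - θ) * p) := by
    refine le_trans (le_of_eq rfl)
      ((ENNReal.lintegral_mul_le_Lp_mul_Lq volume hconj2
        ((hAqm.pow_const _).aemeasurable) ((hmm.pow_const _).aemeasurable)).trans (le_of_eq ?_))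
    simp only [← ENNReal.rpow_mul, he1s, he2s, ENNReal.rpow_one, hFub1, hFub2, h1s, h1s']
  have main : ∫⁻ x, (g x) ^ p ≤ 2 ^ p * c ^ (θ * p / q') * (Nq ^ (θ * p / q) * M ^ ((1 - θ) * p)) := by
    have expand : ∀ x, (2 * ((Aq x) ^ (1/q) * c ^ (1/q')) ^ θ * (m x) ^ (1 - θ)) ^ p
        = (2 ^ p * c ^ (θ * p / q')) * ((Aq x) ^ (θ * p / q) * (m x) ^ ((1 - θ) * p)) := by
      intro x
      rw [ENNReal.mul_rpow_of_nonneg _ _ hp0.le, ENNReal.mul_rpow_of_nonneg _ _ hp0.le,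
        ← ENNReal.rpow_mul, ← ENNReal.rpow_mul,
        ENNReal.mul_rpow_of_nonneg _ _ (by positivity : (0:ℝ) ≤ θ * p),
        ← ENNReal.rpow_mul, ← ENNReal.rpow_mul,
        show 1/q * (θ * p) = θ * p / q by ring,
        show 1/q' * (θ * p) = θ * p / q' by ring]
      ring
    calc ∫⁻ x, (g x) ^ p
        ≤ ∫⁻ x, (2 * ((Aq x) ^ (1/q) * c ^ (1/q')) ^ θ * (m x) ^ (1 - θ)) ^ p :=
          lintegral_mono fun x => ENNReal.rpow_le_rpow (key x) hp0.le
      _ = ∫⁻ x, (2 ^ p * c ^ (θ * p / q')) * ((Aq x) ^ (θ * p / q) * (m x) ^ ((1 - θ) * p)) := by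
          simp only [expand]
      _ = (2 ^ p * c ^ (θ * p / q')) * ∫⁻ x, (Aq x) ^ (θ * p / q) * (m x) ^ ((1 - θ) * p) :=
          lintegral_const_mul _ ((hAqm.pow_const _).mul (hmm.pow_const _))
      _ ≤ _ := mul_le_mul_right hH2 _
  -- identify the LHS
  have hρ : ∀ x, (∫ v, f (x, v)) = (g x).toReal := by
    intro x
    rw [integral_eq_lintegral_of_nonneg_ae (Filter.Eventually.of_forall fun v => hf0 _)
      ((hfm.comp measurable_prodMk_left).aestronglyMeasurable)]
  have hpE0 : ENNReal.ofReal p ≠ 0 := by simp [ENNReal.ofReal_eq_zero, not_le, hp0]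
  have lhs_le : eLpNorm (fun x => ∫ v, f (x, v)) (ENNReal.ofReal p) volume
      ≤ (∫⁻ x, (g x) ^ p) ^ (1/p) := by
    rw [eLpNorm_eq_lintegral_rpow_enorm_toReal hpE0 ENNReal.ofReal_ne_top,
      ENNReal.toReal_ofReal hp0.le]
    refine ENNReal.rpow_le_rpow (lintegral_mono fun x => ?_) (by positivity)
    refine ENNReal.rpow_le_rpow ?_ hp0.le
    rw [hρ x, Real.enorm_eq_ofReal ENNReal.toReal_nonneg]
    exact ENNReal.ofReal_toReal_le
  have hqE0 : ENNReal.ofReal q ≠ 0 := by simp [ENNReal.ofReal_eq_zero, not_le, hq0]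
  have hNq_eLp : eLpNorm f (ENNReal.ofReal q) volume = Nq ^ (1/q) := by
    rw [eLpNorm_eq_lintegral_rpow_enorm_toReal hqE0 ENNReal.ofReal_ne_top,
      ENNReal.toReal_ofReal hq0.le]
    congr 1
    refine lintegral_congr fun z => ?_
    rw [Real.enorm_eq_ofReal (hf0 z)]
  have hInn : 0 ≤ᵐ[volume] fun z : ((Fin d → AddCircle (1:ℝ)) × EuclideanSpace ℝ (Fin d)) =>
      ‖z.2‖ ^ 2 * f z :=
    Filter.Eventually.of_forall fun z => mul_nonneg (by positivity) (hf0 z)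
  have hM : M = ENNReal.ofReal (∫ z, ‖z.2‖ ^ 2 * f z) := by
    rw [ofReal_integral_eq_lintegral_ofReal hfi hInn]
    refine lintegral_congr fun z => ?_
    rw [ENNReal.ofReal_mul (by positivity : (0:ℝ) ≤ ‖z.2‖ ^ 2)]
  have hNqt : Nq ≠ ∞ := by
    have h2 := hfq.2
    rw [hNq_eLp] at h2
    intro h
    rw [h, ENNReal.top_rpow_of_pos (by positivity)] at h2
    exact lt_irrefl _ h2
  have hMt : M ≠ ∞ := by rw [hM]; exact ENNReal.ofReal_ne_top
  have h1θ0 : (0:ℝ) ≤ 1 - θ := by linarith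
  set E : ℝ≥0∞ := 2 * c ^ (θ/q') * Nq ^ (θ/q) * M ^ (1 - θ) with hE
  have final : eLpNorm (fun x => ∫ v, f (x, v)) (ENNReal.ofReal p) volume ≤ E := by
    refine lhs_le.trans ?_
    refine (ENNReal.rpow_le_rpow main (by positivity : (0:ℝ) ≤ 1/p)).trans (le_of_eq ?_)
    rw [ENNReal.mul_rpow_of_nonneg _ _ (by positivity : (0:ℝ) ≤ 1/p),
      ENNReal.mul_rpow_of_nonneg _ _ (by positivity : (0:ℝ) ≤ 1/p),
      ENNReal.mul_rpow_of_nonneg _ _ (by positivity : (0:ℝ) ≤ 1/p)]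
    simp only [← ENNReal.rpow_mul]
    rw [show p * (1/p) = 1 by field_simp, show θ * p / q' * (1/p) = θ/q' by field_simp,
      show θ * p / q * (1/p) = θ/q by field_simp,
      show (1 - θ) * p * (1/p) = 1 - θ by field_simp]
    rw [hE, ENNReal.rpow_one]
    ring
  have hEt : E ≠ ∞ := by
    rw [hE]
    refine ENNReal.mul_ne_top (ENNReal.mul_ne_top (ENNReal.mul_ne_top ?_ ?_) ?_) ?_
    · exact ENNReal.ofNat_ne_top
    · exact ENNReal.rpow_ne_top_of_nonneg (by positivity) hct
    · exact ENNReal.rpow_ne_top_of_nonneg (by positivity) hNqt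
    · exact ENNReal.rpow_ne_top_of_nonneg h1θ0 hMt
  refine le_trans (ENNReal.toReal_mono hEt final) (le_of_eq ?_)
  have hInt0 : (0:ℝ) ≤ ∫ z, ‖z.2‖ ^ 2 * f z := integral_nonneg fun z => mul_nonneg (by positivity) (hf0 z)
  have e1 : (c ^ (θ/q')).toReal = c.toReal ^ (θ/q') := (ENNReal.toReal_rpow _ _).symm
  have e2 : (eLpNorm f (ENNReal.ofReal q) volume).toReal ^ θ = (Nq ^ (θ/q)).toReal := by
    rw [hNq_eLp, ENNReal.toReal_rpow, ← ENNReal.rpow_mul, show 1/q * θ = θ/q by ring]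
  have e3 : (M ^ (1 - θ)).toReal = (∫ z, ‖z.2‖ ^ 2 * f z) ^ (1 - θ) := by
    rw [hM, ENNReal.ofReal_rpow_of_nonneg hInt0 h1θ0,
      ENNReal.toReal_ofReal (Real.rpow_nonneg hInt0 _)]
  rw [hE, ENNReal.toReal_mul, ENNReal.toReal_mul, ENNReal.toReal_mul, e1, e2, e3]
  norm_num

end Main
end
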